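/- Let u, v be orthonormal vectors in a finite-dimensional complex inner product space, let N be a positive integer, and let φ : ℝ → ℝ be differentiable at ω₀. Define ψ(ω) = (e^{−iNφ(ω)/2} u + e^{iNφ(ω)/2} v)/√2. Then ψ is differentiable at ω₀ and 4( ‖ψ'(ω₀)‖² − |⟨ψ(ω₀), ψ'(ω₀)⟩|² ) = N² φ'(ω₀)². -/

import Mathlib

open scoped InnerProductSpace

lemma GHZ_inner_comb {E : Type*} [NormedAddCommGroup E] [InnerProductSpace ℂ E]
    (u v : E) (hu : ‖u‖ = 1) (hv : ‖v‖ = 1) (huv : ⟪u, v⟫_ℂ = 0)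
    (x y p q : ℂ) :
    ⟪x • u + y • v, p • u + q • v⟫_ℂ
      = starRingEnd ℂ x * p + starRingEnd ℂ y * q := by
  have huu : ⟪u, u⟫_ℂ = 1 := by
    rw [inner_self_eq_norm_sq_to_K, hu]; norm_num
  have hvv : ⟪v, v⟫_ℂ = 1 := by
    rw [inner_self_eq_norm_sq_to_K, hv]; norm_num
  have hvu : ⟪v, u⟫_ℂ = 0 := by rw [← inner_conj_symm, huv]; simp
  simp only [inner_add_left, inner_add_right, inner_smul_left, inner_smul_right,
    huu, hvv, huv, hvu, mul_zero, mul_one, add_zero, zero_add]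
  ring

/-- GHZ-type state achieves quantum Fisher information `N²φ̇²`: for orthonormal `u, v` and
`ψ(ω) = (e^{−iNφ(ω)/2} u + e^{iNφ(ω)/2} v)/√2`, `ψ` is differentiable at `ω₀` and
`4(‖ψ'(ω₀)‖² − |⟨ψ(ω₀), ψ'(ω₀)⟩|²) = N² φ'(ω₀)²`. -/
theorem GHZ_pure_state_QFI {E : Type*} [NormedAddCommGroup E] [InnerProductSpace ℂ E]
    [FiniteDimensional ℂ E]
    (u v : E) (hu : ‖u‖ = 1) (hv : ‖v‖ = 1) (huv : ⟪u, v⟫_ℂ = 0)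
    (N : ℕ) (hN : 0 < N) (φ : ℝ → ℝ) (ω₀ : ℝ) (hφ : DifferentiableAt ℝ φ ω₀) :
    DifferentiableAt ℝ
      (fun ω => ((Real.sqrt 2)⁻¹ : ℝ) •
        (Complex.exp (-(Complex.I * N * φ ω / 2)) • u +
          Complex.exp (Complex.I * N * φ ω / 2) • v)) ω₀ ∧
    4 * (‖deriv (fun ω => ((Real.sqrt 2)⁻¹ : ℝ) •
          (Complex.exp (-(Complex.I * N * φ ω / 2)) • u +
            Complex.exp (Complex.I * N * φ ω / 2) • v)) ω₀‖ ^ 2 -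
        ‖⟪((Real.sqrt 2)⁻¹ : ℝ) •
            (Complex.exp (-(Complex.I * N * φ ω₀ / 2)) • u +
              Complex.exp (Complex.I * N * φ ω₀ / 2) • v),
          deriv (fun ω => ((Real.sqrt 2)⁻¹ : ℝ) •
            (Complex.exp (-(Complex.I * N * φ ω / 2)) • u +
              Complex.exp (Complex.I * N * φ ω / 2) • v)) ω₀⟫_ℂ‖ ^ 2)
      = (N : ℝ) ^ 2 * (deriv φ ω₀) ^ 2 := by
  set r : ℝ := (Real.sqrt 2)⁻¹ with hr
  set c : ℂ := Complex.I * N * (deriv φ ω₀) / 2 with hc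
  set a₀ : ℂ := Complex.exp (-(Complex.I * N * φ ω₀ / 2)) with ha₀
  set b₀ : ℂ := Complex.exp (Complex.I * N * φ ω₀ / 2) with hb₀
  have hφd : HasDerivAt φ (deriv φ ω₀) ω₀ := hφ.hasDerivAt
  have hz : HasDerivAt (fun ω : ℝ => Complex.I * N * (φ ω : ℂ) / 2)
      c ω₀ := by
    simpa [mul_comm, mul_assoc, mul_div_assoc, hc] using
      ((hφd.ofReal_comp.const_mul (Complex.I * N)).div_const 2)
  have h1 : HasDerivAt (fun ω : ℝ => Complex.exp (-(Complex.I * N * φ ω / 2)))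
      (a₀ * (-c)) ω₀ := by
    simpa [ha₀] using hz.neg.cexp
  have h2 : HasDerivAt (fun ω : ℝ => Complex.exp (Complex.I * N * φ ω / 2))
      (b₀ * c) ω₀ := by
    simpa [hb₀] using hz.cexp
  have hψ : HasDerivAt (fun ω => (r : ℝ) •
      (Complex.exp (-(Complex.I * N * φ ω / 2)) • u +
        Complex.exp (Complex.I * N * φ ω / 2) • v))
      (r • ((a₀ * (-c)) • u + (b₀ * c) • v)) ω₀ :=
    ((h1.smul_const u).add (h2.smul_const v)).const_smul r
  refine ⟨hψ.differentiableAt, ?_⟩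
  rw [hψ.deriv]
  -- rewrite real smul as complex smul
  have hrs : ∀ (x : E), (r : ℝ) • x = ((r : ℂ)) • x := fun x => by
    rw [← algebraMap_smul ℂ r x, Complex.coe_algebraMap]
  -- basic facts about a₀, b₀
  have hconj_a : starRingEnd ℂ a₀ = b₀ := by
    rw [ha₀, hb₀, ← Complex.exp_conj]
    congr 1
    simp [map_div₀, Complex.conj_I, map_ofNat]
    ring
  have hconj_b : starRingEnd ℂ b₀ = a₀ := by
    rw [ha₀, hb₀, ← Complex.exp_conj]
    congr 1
    simp [map_div₀, Complex.conj_I, map_ofNat]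
    ring
  have hab : a₀ * b₀ = 1 := by
    rw [ha₀, hb₀, ← Complex.exp_add]; simp
  have hconj_c : starRingEnd ℂ c = -c := by
    simp [hc, map_div₀, Complex.conj_I, map_ofNat]
    ring
  have hr2 : (r : ℝ) ^ 2 = 2⁻¹ := by
    rw [hr, inv_pow, sq, Real.mul_self_sqrt (by norm_num)]
  -- the inner products
  have hsmul2 : ∀ (x y : E), ⟪(r : ℝ) • x, (r : ℝ) • y⟫_ℂ = ((r ^ 2 : ℝ) : ℂ) * ⟪x, y⟫_ℂ := by
    intro x y
    rw [hrs, hrs, inner_smul_left, inner_smul_right, Complex.conj_ofReal]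
    push_cast
    ring
  have hinner0 : ⟪(r : ℝ) • (a₀ • u + b₀ • v), (r : ℝ) • ((a₀ * (-c)) • u + (b₀ * c) • v)⟫_ℂ
      = 0 := by
    rw [hsmul2, GHZ_inner_comb u v hu hv huv, hconj_a, hconj_b]
    have : b₀ * (a₀ * -c) + a₀ * (b₀ * c) = 0 := by ring
    rw [this, mul_zero]
  have hinnerD : ⟪(r : ℝ) • ((a₀ * (-c)) • u + (b₀ * c) • v),
      (r : ℝ) • ((a₀ * (-c)) • u + (b₀ * c) • v)⟫_ℂ = -(c ^ 2) := by
    rw [hsmul2, GHZ_inner_comb u v hu hv huv]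
    simp only [map_mul, map_neg, hconj_a, hconj_b, hconj_c]
    have h1 : b₀ * - -c * (a₀ * -c) = -(c ^ 2) * (a₀ * b₀) := by ring
    have h2 : a₀ * -c * (b₀ * c) = -(c ^ 2) * (a₀ * b₀) := by ring
    rw [h1, h2, hab, hr2]
    push_cast
    ring
  have hnormD : ‖(r : ℝ) • ((a₀ * (-c)) • u + (b₀ * c) • v)‖ ^ 2
      = (N : ℝ) ^ 2 * (deriv φ ω₀) ^ 2 / 4 := by
    have hcsq : -(c ^ 2) = ((((N : ℝ) ^ 2 * (deriv φ ω₀) ^ 2 / 4 : ℝ)) : ℂ) := by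
      rw [hc]
      push_cast
      linear_combination (-(N : ℂ) ^ 2 * ((deriv φ ω₀ : ℝ) : ℂ) ^ 2 / 4) * Complex.I_sq
    rw [← @inner_self_eq_norm_sq ℂ, hinnerD, hcsq]
    simp only [RCLike.re_to_complex, Complex.ofReal_re]
  rw [hnormD, hinner0]
  simp
  ring
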